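/- Entropy of a random entry of a random matrix from a large set: let D, N, L be positive integers and c ≥ 0 a real number. Let S be a nonempty subset of the set of functions {1,…,D} × {1,…,N} → {0,1}^L (D×N matrices with entries in {0,1}^L) with |S| ≥ 2^{D·N·L − c}. Fix a row index ρ ∈ {1,…,D}. Let q be the pmf on {0,1}^L of the entry A(ρ, J) when A is drawn uniformly from S and J is drawn uniformly from {1,…,N} independently of A, i.e., q(y) = (1/N) · ∑_{j=1}^{N} |{A ∈ S : A(ρ, j) = y}| / |S|. Then the base-2 Shannon entropy of q satisfies H(q) ≥ L − c/N. (Entropy chain establishing Equation (eqn:entR) in the proof of Lemma 3.2.) -/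

import Mathlib

open Finset

open scoped Classical in
/-- `p` is a probability mass function on the finite type `Ω`. -/
def IsPMF {Ω : Type*} [Fintype Ω] (p : Ω → ℝ) : Prop :=
  (∀ x, 0 ≤ p x) ∧ ∑ x, p x = 1

open scoped Classical in
/-- Statistical distance between two pmfs on a finite type. -/
noncomputable def SD {Ω : Type*} [Fintype Ω] (p q : Ω → ℝ) : ℝ :=
  (1 / 2) * ∑ x, |p x - q x|

open scoped Classical in
/-- Base-2 Shannon entropy of a pmf on a finite type. -/
noncomputable def H2 {Ω : Type*} [Fintype Ω] (p : Ω → ℝ) : ℝ :=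
  ∑ x, if p x = 0 then 0 else p x * Real.logb 2 (1 / p x)

open scoped Classical in
/-- Base-2 Kullback–Leibler divergence between two pmfs on a finite type. -/
noncomputable def KL2 {Ω : Type*} [Fintype Ω] (p q : Ω → ℝ) : ℝ :=
  ∑ x, if p x = 0 then 0 else p x * Real.logb 2 (p x / q x)

lemma H2_eq {Ω : Type*} [Fintype Ω] (p : Ω → ℝ) :
    H2 p = ∑ x, p x * Real.logb 2 (1 / p x) := by
  classical
  unfold H2
  refine Finset.sum_congr rfl fun x _ => ?_
  split_ifs with h
  · simp [h]
  · rfl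

/-- Gibbs' inequality: cross entropy bounds entropy. -/
lemma gibbs {Ω : Type*} [Fintype Ω] (p w : Ω → ℝ) (hp : IsPMF p)
    (hw0 : ∀ x, 0 ≤ w x) (hw1 : ∑ x, w x ≤ 1)
    (hsupp : ∀ x, p x ≠ 0 → w x ≠ 0) :
    H2 p ≤ ∑ x, p x * Real.logb 2 (1 / w x) := by
  classical
  rw [H2_eq, ← sub_nonpos, ← Finset.sum_sub_distrib]
  have hlog2 : (0:ℝ) < Real.log 2 := Real.log_pos one_lt_two
  have key : ∀ x ∈ Finset.univ (α := Ω),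
      p x * Real.logb 2 (1 / p x) - p x * Real.logb 2 (1 / w x)
      ≤ (if p x = 0 then 0 else w x - p x) / Real.log 2 := by
    intro x _
    by_cases h : p x = 0
    · simp [h]
    · have hp' : 0 < p x := (hp.1 x).lt_of_ne (Ne.symm h)
      have hw' : 0 < w x := (hw0 x).lt_of_ne (Ne.symm (hsupp x h))
      rw [if_neg h, ← mul_sub]
      have h1 : Real.logb 2 (1 / p x) - Real.logb 2 (1 / w x)
          = Real.logb 2 (w x / p x) := by
        rw [one_div, one_div, Real.logb_inv, Real.logb_inv,
          Real.logb_div hw'.ne' hp'.ne']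
        ring
      rw [h1, Real.logb, mul_div_assoc']
      have h2 : p x * Real.log (w x / p x) ≤ w x - p x := by
        calc p x * Real.log (w x / p x) ≤ p x * (w x / p x - 1) :=
              mul_le_mul_of_nonneg_left
                (Real.log_le_sub_one_of_pos (div_pos hw' hp')) hp'.le
          _ = w x - p x := by field_simp
      gcongr
  refine (Finset.sum_le_sum key).trans ?_
  rw [← Finset.sum_div]
  apply div_nonpos_of_nonpos_of_nonneg _ hlog2.le
  have e1 : ∑ x : Ω, (if p x = 0 then 0 else w x - p x)
      = ∑ x ∈ Finset.univ.filter (fun x => p x ≠ 0), (w x - p x) := by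
    rw [Finset.sum_filter]
    refine Finset.sum_congr rfl fun x _ => ?_
    by_cases h : p x = 0 <;> simp [h]
  rw [e1, Finset.sum_sub_distrib]
  have e2 : ∑ x ∈ Finset.univ.filter (fun x => p x ≠ 0), p x = 1 := by
    rw [Finset.sum_filter_ne_zero, hp.2]
  have e3 : ∑ x ∈ Finset.univ.filter (fun x => p x ≠ 0), w x ≤ 1 := by
    refine le_trans ?_ hw1
    exact Finset.sum_le_sum_of_subset_of_nonneg (Finset.filter_subset _ _)
      (fun x _ _ => hw0 x)
  linarith

lemma logb2_prod {ι : Type*} (s : Finset ι) (f : ι → ℝ) (h : ∀ i ∈ s, f i ≠ 0) :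
    Real.logb 2 (∏ i ∈ s, f i) = ∑ i ∈ s, Real.logb 2 (f i) := by
  simp only [Real.logb, Real.log_prod h, Finset.sum_div]

open scoped Classical in
/-- Entropy of a random entry of a random matrix from a large set (entropy
chain establishing Equation (eqn:entR) in the proof of Lemma 3.2). -/
theorem entropy_random_entry (D N L : ℕ) (hD : 0 < D) (hN : 0 < N) (hL : 0 < L)
    (c : ℝ) (hc : 0 ≤ c)
    (S : Finset (Fin D × Fin N → (Fin L → Bool))) (hS : S.Nonempty)
    (hcard : (S.card : ℝ) ≥ (2 : ℝ) ^ (((D * N * L : ℕ) : ℝ) - c))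
    (ρ : Fin D)
    (q : (Fin L → Bool) → ℝ)
    (hq : ∀ y, q y = (1 / (N : ℝ)) *
      ∑ j : Fin N, ((S.filter fun A => A (ρ, j) = y).card : ℝ) / S.card) :
    H2 q ≥ (L : ℝ) - c / N := by
  classical
  have hScard : 0 < (S.card : ℝ) := by exact_mod_cast Finset.card_pos.mpr hS
  have hNpos : (0:ℝ) < N := by exact_mod_cast hN
  set p : Fin N → (Fin L → Bool) → ℝ :=
    fun j y => ((S.filter fun A => A (ρ, j) = y).card : ℝ) / S.card with hpdef
  have hp : ∀ j y, p j y = ((S.filter fun A => A (ρ, j) = y).card : ℝ) / S.card :=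
    fun _ _ => rfl
  have hq' : ∀ y, q y = (1 / (N : ℝ)) * ∑ j, p j y := hq
  have hpnn : ∀ j y, 0 ≤ p j y := fun j y => by rw [hp]; positivity
  have hpsum : ∀ j, ∑ y, p j y = 1 := by
    intro j
    simp only [hp]
    rw [← Finset.sum_div, div_eq_one_iff_eq hScard.ne', ← Nat.cast_sum]
    norm_cast
    exact (Finset.card_eq_sum_card_fiberwise
      (fun A _ => Finset.mem_univ (A (ρ, j)))).symm
  have hqnn : ∀ y, 0 ≤ q y := by
    intro y
    rw [hq' y]
    exact mul_nonneg (one_div_nonneg.mpr (Nat.cast_nonneg N))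
      (Finset.sum_nonneg fun j _ => hpnn j y)
  have hqsum : ∑ y, q y = 1 := by
    simp only [hq']
    rw [← Finset.mul_sum, Finset.sum_comm]
    simp only [hpsum]
    rw [Finset.sum_const, Finset.card_univ, Fintype.card_fin, nsmul_eq_mul,
      mul_one]
    field_simp
  have hqsupp : ∀ j y, p j y ≠ 0 → q y ≠ 0 := by
    intro j y hpy
    have hpy' : 0 < p j y := (hpnn j y).lt_of_ne (Ne.symm hpy)
    have hle : p j y ≤ ∑ j', p j' y :=
      Finset.single_le_sum (fun j' _ => hpnn j' y) (Finset.mem_univ j)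
    have : 0 < q y := by
      rw [hq' y]
      exact mul_pos (one_div_pos.mpr hNpos) (hpy'.trans_le hle)
    exact this.ne'
  -- Step 1: concavity-type inequality via Gibbs
  have step1 : ∑ j, H2 (p j) ≤ (N : ℝ) * H2 q := by
    have h1 : ∀ j, H2 (p j) ≤ ∑ y, p j y * Real.logb 2 (1 / q y) := by
      intro j
      exact gibbs (p j) q ⟨hpnn j, hpsum j⟩ hqnn (le_of_eq hqsum) (hqsupp j)
    calc ∑ j, H2 (p j) ≤ ∑ j, ∑ y, p j y * Real.logb 2 (1 / q y) :=
          Finset.sum_le_sum fun j _ => h1 j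
      _ = ∑ y, (∑ j, p j y) * Real.logb 2 (1 / q y) := by
          rw [Finset.sum_comm]
          exact Finset.sum_congr rfl fun y _ => (Finset.sum_mul _ _ _).symm
      _ = ∑ y, ((N : ℝ) * q y) * Real.logb 2 (1 / q y) := by
          refine Finset.sum_congr rfl fun y _ => ?_
          rw [hq' y]
          field_simp
      _ = (N : ℝ) * H2 q := by
          rw [H2_eq, Finset.mul_sum]
          exact Finset.sum_congr rfl fun y _ => by ring
  -- Step 2: subadditivity via Gibbs with a product reference measure
  have step2 : Real.logb 2 S.card ≤ ∑ j, H2 (p j) + (((D-1)*N : ℕ) : ℝ) * L := by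
    set g : (Fin D × Fin N) → (Fin L → Bool) → ℝ :=
      fun x y => if x.1 = ρ then p x.2 y else ((2:ℝ)^L)⁻¹ with hg
    have hcardV : (Fintype.card (Fin L → Bool)) = 2^L := by simp
    have hgnn : ∀ x y, 0 ≤ g x y := by
      intro x y
      by_cases h : x.1 = ρ
      · simpa [hg, h] using hpnn x.2 y
      · simp only [hg, if_neg h]
        positivity
    have hgsum : ∀ x, ∑ y, g x y = 1 := by
      intro x
      by_cases h : x.1 = ρ
      · simp [hg, h, hpsum]
      · simp only [hg, if_neg h, Finset.sum_const, Finset.card_univ, hcardV,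
          nsmul_eq_mul]
        push_cast
        exact mul_inv_cancel₀ (by positivity)
    set w : (Fin D × Fin N → (Fin L → Bool)) → ℝ :=
      fun A => ∏ x, g x (A x) with hwdef
    have hwnn : ∀ A, 0 ≤ w A :=
      fun A => Finset.prod_nonneg fun x _ => hgnn x (A x)
    have hwsum : ∑ A, w A = 1 := by
      have h1 := Finset.prod_univ_sum (fun _ : Fin D × Fin N =>
        (Finset.univ : Finset (Fin L → Bool))) g
      rw [Fintype.piFinset_univ] at h1
      rw [hwdef, ← h1]
      simp [hgsum]
    set u : (Fin D × Fin N → (Fin L → Bool)) → ℝ :=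
      fun A => if A ∈ S then (S.card:ℝ)⁻¹ else 0 with hu
    have hupmf : IsPMF u := by
      constructor
      · intro A; by_cases h : A ∈ S <;> simp [hu, h, hScard.le]
      · simp only [hu, Finset.sum_ite_mem, Finset.univ_inter, Finset.sum_const,
          nsmul_eq_mul]
        field_simp
    have hgne : ∀ A ∈ S, ∀ x : Fin D × Fin N, g x (A x) ≠ 0 := by
      intro A hA x
      obtain ⟨i, j⟩ := x
      by_cases h : i = ρ
      · subst h
        simp only [hg, if_pos rfl, hp]
        have hmem : A ∈ S.filter fun B => B (i, j) = A (i, j) :=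
          Finset.mem_filter.2 ⟨hA, rfl⟩
        have hpos : 0 < (S.filter fun B => B (i, j) = A (i, j)).card :=
          Finset.card_pos.2 ⟨A, hmem⟩
        positivity
      · simp only [hg, if_neg h]
        positivity
    have hwne : ∀ A, u A ≠ 0 → w A ≠ 0 := by
      intro A hA
      have hAS : A ∈ S := by
        by_contra h
        exact hA (by simp [hu, h])
      exact Finset.prod_ne_zero_iff.2 fun x _ => hgne A hAS x
    have hHu : H2 u = Real.logb 2 S.card := by
      rw [H2_eq]
      have e : ∀ A, u A * Real.logb 2 (1 / u A)
          = if A ∈ S then (S.card:ℝ)⁻¹ * Real.logb 2 S.card else 0 := by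
        intro A
        by_cases h : A ∈ S <;> simp [hu, h, one_div, inv_inv]
      rw [Finset.sum_congr rfl (fun A _ => e A), Finset.sum_ite_mem,
        Finset.univ_inter, Finset.sum_const, nsmul_eq_mul]
      field_simp
    have hlogw : ∀ A ∈ S, Real.logb 2 (1 / w A)
        = (∑ j, Real.logb 2 (1 / p j (A (ρ, j)))) + (((D-1)*N : ℕ) : ℝ) * L := by
      intro A hA
      rw [hwdef, one_div, Real.logb_inv, logb2_prod _ _ (fun x _ => hgne A hA x),
        Fintype.sum_prod_type]
      have hrow : ∀ i : Fin D, ∑ j, Real.logb 2 (g (i, j) (A (i, j)))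
          = if i = ρ then ∑ j, Real.logb 2 (p j (A (ρ, j)))
            else -((N:ℝ) * L) := by
        intro i
        by_cases h : i = ρ
        · subst h; simp [hg]
        · simp only [hg, if_neg h, Real.logb_inv, Finset.sum_const,
            Finset.card_univ, Fintype.card_fin, nsmul_eq_mul, if_neg h]
          rw [Real.logb_pow, Real.logb_self_eq_one (by norm_num)]
          ring
      rw [Finset.sum_congr rfl (fun i _ => hrow i),
        ← Finset.add_sum_erase _ _ (Finset.mem_univ ρ), if_pos rfl,
        Finset.sum_congr rfl (fun i hi => if_neg (Finset.ne_of_mem_erase hi)),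
        Finset.sum_const, Finset.card_erase_of_mem (Finset.mem_univ ρ),
        Finset.card_univ, Fintype.card_fin, nsmul_eq_mul]
      simp only [one_div, Real.logb_inv, Finset.sum_neg_distrib]
      push_cast [Nat.cast_sub hD]
      ring
    have hfiber : ∀ j : Fin N,
        ∑ A ∈ S, (S.card:ℝ)⁻¹ * Real.logb 2 (1 / p j (A (ρ, j))) = H2 (p j) := by
      intro j
      rw [← Finset.sum_fiberwise_of_maps_to
        (fun A (_ : A ∈ S) => Finset.mem_univ (A (ρ, j)))
        (fun A => (S.card:ℝ)⁻¹ * Real.logb 2 (1 / p j (A (ρ, j)))), H2_eq]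
      refine Finset.sum_congr rfl fun y _ => ?_
      have e : ∀ A ∈ S.filter (fun A => A (ρ, j) = y),
          (S.card:ℝ)⁻¹ * Real.logb 2 (1 / p j (A (ρ, j)))
          = (S.card:ℝ)⁻¹ * Real.logb 2 (1 / p j y) := by
        intro A hA
        rw [(Finset.mem_filter.1 hA).2]
      rw [Finset.sum_congr rfl e, Finset.sum_const, nsmul_eq_mul, hp]
      ring
    calc Real.logb 2 S.card = H2 u := hHu.symm
      _ ≤ ∑ A, u A * Real.logb 2 (1 / w A) :=
          gibbs u w hupmf hwnn (le_of_eq hwsum) hwne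
      _ = ∑ A ∈ S, (S.card:ℝ)⁻¹ * Real.logb 2 (1 / w A) := by
          simp only [hu, ite_mul, zero_mul]
          rw [Finset.sum_ite_mem, Finset.univ_inter]
      _ = ∑ A ∈ S, ((∑ j, (S.card:ℝ)⁻¹ * Real.logb 2 (1 / p j (A (ρ, j))))
            + (S.card:ℝ)⁻¹ * ((((D-1)*N : ℕ) : ℝ) * L)) := by
          refine Finset.sum_congr rfl fun A hA => ?_
          rw [hlogw A hA, mul_add, Finset.mul_sum]
      _ = (∑ j, ∑ A ∈ S, (S.card:ℝ)⁻¹ * Real.logb 2 (1 / p j (A (ρ, j))))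
            + (((D-1)*N : ℕ) : ℝ) * L := by
          rw [Finset.sum_add_distrib, Finset.sum_comm, Finset.sum_const,
            nsmul_eq_mul]
          congr 1
          field_simp
      _ = ∑ j, H2 (p j) + (((D-1)*N : ℕ) : ℝ) * L := by
          rw [Finset.sum_congr rfl fun j _ => hfiber j]
  -- Combine
  have hlogS : (((D * N * L : ℕ) : ℝ) - c) ≤ Real.logb 2 S.card :=
    (Real.le_logb_iff_rpow_le one_lt_two hScard).mpr hcard
  have hcast : (((D-1)*N : ℕ) : ℝ) * L = ((D:ℝ) - 1) * N * L := by
    push_cast [Nat.cast_sub hD]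
    ring
  have hmain : (N : ℝ) * ((L:ℝ) - c / N) ≤ (N : ℝ) * H2 q := by
    have h1 : (N : ℝ) * ((L:ℝ) - c / N) = (N:ℝ) * L - c := by
      field_simp
    have h2 : (((D * N * L : ℕ) : ℝ)) = (D:ℝ) * N * L := by push_cast; ring
    rw [h1]
    have := step1
    rw [hcast] at step2
    rw [h2] at hlogS
    nlinarith [step1, step2, hlogS]
  exact le_of_mul_le_mul_left hmain hNpos
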